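/- arXiv:math/0010172 — 2 statements merged into one kernel-verified Lean document; each statement's English description precedes it below -/
import Mathlib

section
/- For a skew-symmetric matrix F viewed as the even element ½⟨ρ, Fρ⟩ = ½ Σ_{a,b} ρₐ F_{ab} ρ_b in the Grassmann algebra Λ(ℝ^{2s+2}) (n = 2s+2 even), the Berezin integral ∫[Dρ] exp(½⟨ρ,Fρ⟩) equals the Pfaffian of F. -/
open ExteriorAlgebra

noncomputable def pfaffian (s : ℕ) (F : Matrix (Fin (2 * s + 2)) (Fin (2 * s + 2)) ℝ) : ℝ :=
  (1 / (2 ^ (s + 1) * (Nat.factorial (s + 1) : ℝ))) *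
    ∑ σ : Equiv.Perm (Fin (2 * s + 2)),
      ((Equiv.Perm.sign σ : ℤ) : ℝ) *
        ∏ i : Fin (s + 1),
          F (σ ⟨2 * (i : ℕ), by have := i.isLt; omega⟩)
            (σ ⟨2 * (i : ℕ) + 1, by have := i.isLt; omega⟩)

lemma ofFn_smul_prod {A : Type*} [Ring A] [Algebra ℝ A] :
    ∀ (k : ℕ) (c : Fin k → ℝ) (m : Fin k → A),
    (List.ofFn fun i => c i • m i).prod = (∏ i, c i) • (List.ofFn m).prod
  | 0, c, m => by simp
  | (k+1), c, m => by
    rw [List.ofFn_succ, List.ofFn_succ, List.prod_cons, List.prod_cons,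
      ofFn_smul_prod k, Fin.prod_univ_succ, smul_mul_assoc, mul_smul_comm, smul_smul]

lemma sum_pow_ofFn {A : Type*} [Ring A] {ι : Type*} [Fintype ι] [DecidableEq ι] (x : ι → A) :
    ∀ k : ℕ, (∑ p, x p) ^ k = ∑ g : Fin k → ι, (List.ofFn fun i => x (g i)).prod
  | 0 => by simp
  | (k+1) => by
    rw [pow_succ', sum_pow_ofFn x k, Finset.sum_mul_sum]
    rw [← Equiv.sum_comp (Fin.consEquiv (fun _ : Fin (k+1) => ι))
      (fun g => (List.ofFn fun i => x (g i)).prod), Fintype.sum_prod_type]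
    refine Finset.sum_congr rfl fun p _ => Finset.sum_congr rfl fun g _ => ?_
    rw [List.ofFn_succ, List.prod_cons]
    simp [Fin.consEquiv]

def itl {n k : ℕ} (a b : Fin k → Fin n) : Fin (2*k) → Fin n :=
  fun j => if (j : ℕ) % 2 = 0 then a ⟨(j : ℕ)/2, by have := j.isLt; omega⟩
    else b ⟨(j : ℕ)/2, by have := j.isLt; omega⟩

lemma prod_pairs {A : Type*} [Ring A] {n : ℕ} (ρ : Fin n → A) :
    ∀ (k : ℕ) (a b : Fin k → Fin n),
    (List.ofFn fun i => ρ (a i) * ρ (b i)).prod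
      = (List.ofFn fun j => ρ (itl a b j)).prod
  | 0, a, b => by
    rw [show (List.ofFn fun j : Fin (2*0) => ρ (itl a b j)) = [] from List.ofFn_zero,
        show (List.ofFn fun i : Fin 0 => ρ (a i) * ρ (b i)) = [] from List.ofFn_zero]
  | (k+1), a, b => by
    have h0 : itl a b 0 = a 0 := by simp [itl]
    have h1 : itl a b ((0 : Fin (2*k+1)).succ) = b 0 := by
      simp only [itl, Fin.val_succ, Fin.val_zero]
      norm_num
    have h2 : ∀ j : Fin (2*k), itl a b (j.succ.succ)
        = itl (fun i => a i.succ) (fun i => b i.succ) j := by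
      intro j
      simp only [itl, Fin.val_succ]
      by_cases hj : (j : ℕ) % 2 = 0
      · rw [if_pos (by omega), if_pos hj]
        exact congrArg a (Fin.ext (show ((j:ℕ)+1+1)/2 = (j:ℕ)/2 + 1 by omega))
      · rw [if_neg (by omega), if_neg hj]
        exact congrArg b (Fin.ext (show ((j:ℕ)+1+1)/2 = (j:ℕ)/2 + 1 by omega))
    show (List.ofFn fun i : Fin (k+1) => ρ (a i) * ρ (b i)).prod
        = (List.ofFn fun j : Fin (2*k+1+1) => ρ (itl a b j)).prod
    rw [List.ofFn_succ, List.ofFn_succ, List.ofFn_succ, List.prod_cons, List.prod_cons,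
      List.prod_cons, h0, h1]
    simp only [h2]
    rw [prod_pairs ρ k (fun i => a i.succ) (fun i => b i.succ), mul_assoc]



def pairFn {s : ℕ} (c : Fin (2*s+2) → Fin (2*s+2)) :
    Fin (s+1) → Fin (2*s+2) × Fin (2*s+2) :=
  fun i => (c ⟨2*(i : ℕ), by have := i.isLt; omega⟩,
            c ⟨2*(i : ℕ)+1, by have := i.isLt; omega⟩)

def pairEquiv (s : ℕ) :
    (Fin (2*s+2) → Fin (2*s+2)) ≃ (Fin (s+1) → Fin (2*s+2) × Fin (2*s+2)) where
  toFun := pairFn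
  invFun g := itl (fun i => (g i).1) (fun i => (g i).2)
  left_inv c := by
    funext j
    have hj := j.isLt
    simp only [itl, pairFn]
    split_ifs with h
    · exact congrArg c (Fin.ext (show 2*((j:ℕ)/2) = (j:ℕ) by omega))
    · exact congrArg c (Fin.ext (show 2*((j:ℕ)/2)+1 = (j:ℕ) by omega))
  right_inv g := by
    funext i
    refine Prod.ext ?_ ?_
    · show itl (fun i => (g i).1) (fun i => (g i).2) ⟨2*(i:ℕ), _⟩ = (g i).1
      simp only [itl]
      rw [if_pos (by omega)]
      exact congrArg (fun z => (g z).1) (Fin.ext (show 2*(i:ℕ)/2 = (i:ℕ) by omega))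
    · show itl (fun i => (g i).1) (fun i => (g i).2) ⟨2*(i:ℕ)+1, _⟩ = (g i).2
      simp only [itl]
      rw [if_neg (by omega)]
      exact congrArg (fun z => (g z).2) (Fin.ext (show (2*(i:ℕ)+1)/2 = (i:ℕ) by omega))

lemma prod_rho_zero (s : ℕ)
    (ρ : Fin (2 * s + 2) → ExteriorAlgebra ℝ (Fin (2 * s + 2) → ℝ))
    (hρ : ∀ i, ρ i = ExteriorAlgebra.ι ℝ (Pi.basisFun ℝ (Fin (2 * s + 2)) i))
    {m : ℕ} (c : Fin m → Fin (2*s+2)) (hc : ¬ Function.Injective c) :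
    (List.ofFn fun j => ρ (c j)).prod = 0 := by
  have h1 : (List.ofFn fun j => ρ (c j)).prod
      = ιMulti ℝ m (fun j => (Pi.basisFun ℝ (Fin (2*s+2))) (c j)) := by
    rw [ιMulti_apply]
    exact congrArg List.prod (congrArg List.ofFn (funext fun j => hρ (c j)))
  rw [h1]
  obtain ⟨i, j, hij, hne⟩ := Function.not_injective_iff.mp hc
  exact AlternatingMap.map_eq_zero_of_eq _ _ (by rw [hij]) hne

lemma prod_rho_perm (s : ℕ)
    (ρ : Fin (2 * s + 2) → ExteriorAlgebra ℝ (Fin (2 * s + 2) → ℝ))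
    (hρ : ∀ i, ρ i = ExteriorAlgebra.ι ℝ (Pi.basisFun ℝ (Fin (2 * s + 2)) i))
    (σ : Equiv.Perm (Fin (2*s+2))) :
    (List.ofFn fun j => ρ (σ j)).prod
      = ((Equiv.Perm.sign σ : ℤ) : ℝ) • (List.ofFn ρ).prod := by
  have h1 : (List.ofFn fun j => ρ (σ j)).prod
      = ιMulti ℝ (2*s+2) ((⇑(Pi.basisFun ℝ (Fin (2*s+2)))) ∘ ⇑σ) := by
    rw [ιMulti_apply]
    exact congrArg List.prod (congrArg List.ofFn (funext fun j => hρ (σ j)))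
  have h2 : (List.ofFn ρ).prod = ιMulti ℝ (2*s+2) (⇑(Pi.basisFun ℝ (Fin (2*s+2)))) := by
    rw [ιMulti_apply]
    exact congrArg List.prod (congrArg List.ofFn (funext fun j => hρ j))
  rw [h1, h2, AlternatingMap.map_perm, Units.smul_def, ← Int.cast_smul_eq_zsmul ℝ]

set_option maxHeartbeats 1600000 in
/-- for a skew-symmetric matrix `F`, the Berezin integral of
`exp(½⟨ρ, Fρ⟩)` in the Grassmann algebra `Λ(ℝ^{2s+2})` equals the Pfaffian
of `F`.  (`exp` is the finite sum `Σ_k q^k/k!` of the nilpotent element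
`q = ½ Σ_{a,b} ρ_a F_{ab} ρ_b`.) -/
theorem stmt_12 (s : ℕ)
    (Binteg : ExteriorAlgebra ℝ (Fin (2 * s + 2) → ℝ) →ₗ[ℝ] ℝ)
    (ρ : Fin (2 * s + 2) → ExteriorAlgebra ℝ (Fin (2 * s + 2) → ℝ))
    (hρ : ∀ i, ρ i = ExteriorAlgebra.ι ℝ (Pi.basisFun ℝ (Fin (2 * s + 2)) i))
    (hlow : ∀ k < 2 * s + 2, ∀ x ∈ (LinearMap.range
        (ExteriorAlgebra.ι ℝ :
          (Fin (2 * s + 2) → ℝ) →ₗ[ℝ] ExteriorAlgebra ℝ (Fin (2 * s + 2) → ℝ)) ^ k :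
        Submodule ℝ (ExteriorAlgebra ℝ (Fin (2 * s + 2) → ℝ))), Binteg x = 0)
    (htop : Binteg (List.ofFn ρ).prod = 1)
    (F : Matrix (Fin (2 * s + 2)) (Fin (2 * s + 2)) ℝ)
    (hF : F.transpose = -F) :
    Binteg (∑ k ∈ Finset.range (2 * s + 3),
        ((Nat.factorial k : ℝ))⁻¹ •
          ((1 / 2 : ℝ) • ∑ a : Fin (2 * s + 2), ∑ b : Fin (2 * s + 2),
              F a b • (ρ a * ρ b)) ^ k)
      = pfaffian s F := by
  classical
  set q : ExteriorAlgebra ℝ (Fin (2 * s + 2) → ℝ) :=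
    (1 / 2 : ℝ) • ∑ a : Fin (2 * s + 2), ∑ b : Fin (2 * s + 2), F a b • (ρ a * ρ b) with hq
  -- expansion of q^k
  have hx : (∑ p : Fin (2*s+2) × Fin (2*s+2), F p.1 p.2 • (ρ p.1 * ρ p.2))
      = ∑ a : Fin (2 * s + 2), ∑ b : Fin (2 * s + 2), F a b • (ρ a * ρ b) :=
    Fintype.sum_prod_type _
  have hqk : ∀ k : ℕ, q ^ k = (1/2:ℝ)^k •
      ∑ g : Fin k → (Fin (2*s+2) × Fin (2*s+2)),
        (∏ i, F (g i).1 (g i).2) •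
          (List.ofFn fun j : Fin (2*k) =>
            ρ (itl (fun i => (g i).1) (fun i => (g i).2) j)).prod := by
    intro k
    rw [hq, ← hx, smul_pow, sum_pow_ofFn]
    congr 1
    refine Finset.sum_congr rfl fun g _ => ?_
    rw [ofFn_smul_prod k (fun i => F (g i).1 (g i).2) (fun i => ρ (g i).1 * ρ (g i).2),
      prod_pairs ρ k (fun i => (g i).1) (fun i => (g i).2)]
  -- low degrees vanish
  have hsmall : ∀ k : ℕ, k ≤ s → Binteg (q ^ k) = 0 := by
    intro k hk
    have hqmem : q ∈ (LinearMap.range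
        (ExteriorAlgebra.ι ℝ :
          (Fin (2 * s + 2) → ℝ) →ₗ[ℝ] ExteriorAlgebra ℝ (Fin (2 * s + 2) → ℝ)))^2 := by
      rw [hq]
      refine Submodule.smul_mem _ _ (Submodule.sum_mem _ fun a _ =>
        Submodule.sum_mem _ fun b _ => Submodule.smul_mem _ _ ?_)
      rw [pow_two, hρ a, hρ b]
      exact Submodule.mul_mem_mul (LinearMap.mem_range_self _ _) (LinearMap.mem_range_self _ _)
    have hmem : q ^ k ∈ (LinearMap.range
        (ExteriorAlgebra.ι ℝ :
          (Fin (2 * s + 2) → ℝ) →ₗ[ℝ] ExteriorAlgebra ℝ (Fin (2 * s + 2) → ℝ)))^(2*k) := by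
      rw [pow_mul]
      exact Submodule.pow_mem_pow _ hqmem k
    exact hlow (2*k) (by omega) _ hmem
  -- high degrees vanish
  have hbig : ∀ k : ℕ, s + 1 < k → Binteg (q ^ k) = 0 := by
    intro k hk
    rw [hqk k, map_smul]
    have hz : ∀ g : Fin k → Fin (2*s+2) × Fin (2*s+2),
        (List.ofFn fun j : Fin (2*k) =>
          ρ (itl (fun i => (g i).1) (fun i => (g i).2) j)).prod = 0 := by
      intro g
      apply prod_rho_zero s ρ hρ
      intro hinj
      have hcard := Fintype.card_le_of_injective _ hinj
      simp only [Fintype.card_fin] at hcard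
      omega
    simp only [hz, smul_zero, Finset.sum_const_zero, map_zero]
  -- the main term
  have hmain : Binteg (q ^ (s+1)) = (1/2:ℝ)^(s+1) *
      ∑ σ : Equiv.Perm (Fin (2 * s + 2)),
        ((Equiv.Perm.sign σ : ℤ) : ℝ) *
          ∏ i : Fin (s + 1),
            F (σ ⟨2 * (i : ℕ), by have := i.isLt; omega⟩)
              (σ ⟨2 * (i : ℕ) + 1, by have := i.isLt; omega⟩) := by
    rw [hqk (s+1), map_smul, map_sum, smul_eq_mul]
    congr 1
    rw [← Equiv.sum_comp (pairEquiv s)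
      (fun g => Binteg ((∏ i, F (g i).1 (g i).2) •
        (List.ofFn fun j : Fin (2*(s+1)) =>
          ρ (itl (fun i => (g i).1) (fun i => (g i).2) j)).prod))]
    have hitl : ∀ c : Fin (2*s+2) → Fin (2*s+2),
        itl (fun i => ((pairEquiv s) c i).1) (fun i => ((pairEquiv s) c i).2) = c :=
      fun c => (pairEquiv s).left_inv c
    have hterm : ∀ c : Fin (2*s+2) → Fin (2*s+2),
        Binteg ((∏ i, F (((pairEquiv s) c i)).1 (((pairEquiv s) c i)).2) •
          (List.ofFn fun j : Fin (2*(s+1)) =>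
            ρ (itl (fun i => ((pairEquiv s) c i).1) (fun i => ((pairEquiv s) c i).2) j)).prod)
        = (∏ i : Fin (s+1), F (c ⟨2 * (i : ℕ), by have := i.isLt; omega⟩)
              (c ⟨2 * (i : ℕ) + 1, by have := i.isLt; omega⟩)) *
            Binteg ((List.ofFn fun j : Fin (2*s+2) => ρ (c j)).prod) := by
      intro c
      rw [hitl c, map_smul, smul_eq_mul]
      rfl
    simp only [hterm]
    -- now restrict to injective maps and identify with permutations
    rw [← Finset.sum_filter_of_ne
      (p := fun c : Fin (2*s+2) → Fin (2*s+2) => Function.Injective c)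
      (by
        intro c _ hne
        by_contra hninj
        exact hne (by rw [prod_rho_zero s ρ hρ c hninj, map_zero, mul_zero]))]
    refine (Finset.sum_bij (fun (σ : Equiv.Perm (Fin (2*s+2))) _ => ⇑σ)
      ?_ ?_ ?_ ?_).symm
    · intro σ _
      exact Finset.mem_filter.mpr ⟨Finset.mem_univ _, σ.injective⟩
    · intro σ₁ _ σ₂ _ h
      exact Equiv.coe_fn_injective h
    · intro c hc
      exact ⟨Equiv.ofBijective c
        (Finite.injective_iff_bijective.mp (Finset.mem_filter.mp hc).2),
        Finset.mem_univ _, rfl⟩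
    · intro σ _
      rw [prod_rho_perm s ρ hρ σ, map_smul, htop, smul_eq_mul, mul_one, mul_comm]
  -- assemble
  rw [map_sum]
  rw [Finset.sum_eq_single_of_mem (s+1) (Finset.mem_range.mpr (by omega))
    (fun k _ hne => by
      rcases Nat.lt_or_ge k (s+1) with h | h
      · rw [map_smul, hsmall k (by omega), smul_zero]
      · rw [map_smul, hbig k (by omega), smul_zero])]
  rw [map_smul, hmain, smul_eq_mul, pfaffian]
  have h1 : ((Nat.factorial (s+1) : ℝ)) ≠ 0 :=
    Nat.cast_ne_zero.mpr (Nat.factorial_ne_zero _)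
  rw [← mul_assoc]
  congr 1
  field_simp
  ring_nf
  rw [← mul_pow]; norm_num
end

section
/- Let π₁ : E → F and π₂ : F → M be smooth oriented fiber bundles with compact oriented fibers, and let π = π₂ ∘ π₁ : E → M be the composite bundle, oriented by the product orientation of the composite fiber. Then fiber integration is functorial: π_* α = (π₂)_* ((π₁)_* α) for every differential form α on E. -/
/-- functoriality (Fubini) of fiber integration.  Let
`π₁ : E → F` and `π₂ : F → M` be oriented fiber bundles with compact oriented
fibers and `π = π₂ ∘ π₁ : E → M` the composite bundle with the product
orientation of the composite fiber.  Fiber integration is characterized by the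
duality `∫_M (π_*ω) ∧ η = ∫_E ω ∧ π^*η` (and similarly for `π₁, π₂`), the
pairing on `M` being nondegenerate, and pullback is functorial:
`π^* = π₁^* ∘ π₂^*`.  Then `π_* = (π₂)_* ∘ (π₁)_*`. -/
theorem stmt_17 {ΩE ΩF ΩM : Type*} [Ring ΩE] [Ring ΩF] [Ring ΩM]
    (pb1 : ΩF →+* ΩE)   -- π₁^*
    (pb2 : ΩM →+* ΩF)   -- π₂^*
    (pb : ΩM →+* ΩE)    -- π^*
    (P1 : ΩE →+ ΩF) (P2 : ΩF →+ ΩM) (P : ΩE →+ ΩM)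
    (intE : ΩE →+ ℝ) (intF : ΩF →+ ℝ) (intM : ΩM →+ ℝ)
    (hpb : ∀ x, pb x = pb1 (pb2 x))
    (hdual1 : ∀ ω η, intF (P1 ω * η) = intE (ω * pb1 η))
    (hdual2 : ∀ σ τ, intM (P2 σ * τ) = intF (σ * pb2 τ))
    (hdualP : ∀ ω τ, intM (P ω * τ) = intE (ω * pb τ))
    (hnd : ∀ x : ΩM, (∀ η, intM (x * η) = 0) → x = 0) :
    ∀ α : ΩE, P α = P2 (P1 α) := by
  intro α
  have h : P α - P2 (P1 α) = 0 := by
    apply hnd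
    intro η
    have : intM (P α * η) = intM (P2 (P1 α) * η) := by
      rw [hdualP, hdual2, hdual1, hpb]
    rw [sub_mul, map_sub, this, sub_self]
  exact sub_eq_zero.mp h
end
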